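/- Let f : A ⇀ B be a partial function. Then the following are equivalent: (1) for every set D and every partial function g : B ⇀ D, if rank(f⬝g) = rank(g) then ran(f⬝g) = ran(g) (i.e., f is L-stable in the category of partial functions); (2) ran(f) is finite, or f is surjective (ran(f) = B). -/

import Mathlib

universe u

private lemma ran_comp_subset {B D : Type u} {A : Type u} (f : A →. B) (g : B →. D) :
    (g.comp f).ran ⊆ g.ran := by
  rintro y ⟨a, hy⟩
  erw [PFun.comp_apply, Part.mem_bind_iff] at hy
  obtain ⟨b, _, hb⟩ := hy
  exact ⟨b, hb⟩

/-- A partial function `f : A ⇀ B` is L-stable (i.e. for every `g : B ⇀ D`,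
`rank (f⬝g) = rank g` implies `ran (f⬝g) = ran g`) iff `ran f` is finite or `f` is surjective. -/
theorem L_stable_iff_PT {A B : Type u} (f : A →. B) :
    (∀ (D : Type u) (g : B →. D),
        Cardinal.mk ↥(g.comp f).ran = Cardinal.mk ↥g.ran →
          (g.comp f).ran = g.ran) ↔
      (f.ran.Finite ∨ f.ran = Set.univ) := by
  constructor
  · intro h
    by_contra hc
    push_neg at hc
    obtain ⟨hinf, hnsurj⟩ := hc
    obtain ⟨b, hb⟩ : ∃ b, b ∉ f.ran := by
      by_contra hb; push_neg at hb
      exact hnsurj (Set.eq_univ_of_forall hb)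
    set g : B →. B := fun x => ⟨x ∈ insert b f.ran, fun _ => x⟩ with hg
    have hgr : g.ran = insert b f.ran := by
      ext y
      constructor
      · rintro ⟨x, hx, rfl⟩; exact hx
      · intro hy; exact ⟨y, hy, rfl⟩
    have hcr : (g.comp f).ran = f.ran := by
      ext y
      constructor
      · rintro ⟨a, hy⟩
        rw [PFun.comp_apply, Part.mem_bind_iff] at hy
        obtain ⟨c, hc1, hc2, rfl⟩ := hy
        exact ⟨a, hc1⟩
      · rintro ⟨a, ha⟩
        refine ⟨a, ?_⟩
        rw [PFun.comp_apply, Part.mem_bind_iff]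
        exact ⟨y, ha, Set.mem_insert_of_mem _ ⟨a, ha⟩, rfl⟩
    have hcard : Cardinal.mk ↥(g.comp f).ran = Cardinal.mk ↥g.ran := by
      rw [hcr, hgr, Cardinal.mk_insert hb, Cardinal.add_one_eq]
      rw [Cardinal.aleph0_le_mk_iff, Set.infinite_coe_iff]
      exact hinf
    have := h B g hcard
    rw [hcr, hgr] at this
    exact hb (this ▸ Set.mem_insert b f.ran)
  · rintro (hfin | hsurj) D g hcard
    · have hsub : (g.comp f).ran ⊆ g.ran := ran_comp_subset f g
      have hfin' : (g.comp f).ran.Finite := by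
        have hbig : (⋃ b ∈ f.ran, {y | y ∈ g b}).Finite :=
          hfin.biUnion fun b _ =>
            Set.Subsingleton.finite fun x hx y hy => Part.mem_unique hx hy
        refine hbig.subset ?_
        rintro y ⟨a, hy⟩
        erw [PFun.comp_apply, Part.mem_bind_iff] at hy
        obtain ⟨c, hc1, hc2⟩ := hy
        exact Set.mem_biUnion ⟨a, hc1⟩ hc2
      have h1 : (g.comp f).ran.ncard = g.ran.ncard := by
        rw [← Nat.card_coe_set_eq, ← Nat.card_coe_set_eq]
        unfold Nat.card
        rw [hcard]
      have hfin'' : g.ran.Finite := by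
        rw [← Cardinal.lt_aleph0_iff_set_finite, ← hcard,
          Cardinal.lt_aleph0_iff_set_finite]
        exact hfin'
      exact Set.eq_of_subset_of_ncard_le hsub h1.ge hfin''
    · ext y
      constructor
      · intro hy; exact ran_comp_subset f g hy
      · rintro ⟨c, hc⟩
        have : c ∈ f.ran := hsurj ▸ Set.mem_univ c
        obtain ⟨a, ha⟩ := this
        refine ⟨a, ?_⟩
        erw [PFun.comp_apply, Part.mem_bind_iff]
        exact ⟨c, ha, hc⟩
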